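/- Let G be a port-numbered graph of diameter D and level of symmetry λ in which all vertices have pairwise distinct views. Then any two vertices u and v with V^{D+λ}(u) = V^{D+λ}(v) are equal; i.e., all views truncated at depth D+λ are already pairwise distinct. -/

import Mathlib

/-- A port-numbered graph on vertex type `V`: a finite connected simple graph in which,
at every vertex `v` of degree `deg v`, the incident edges are labeled by distinct port
numbers `0, …, deg v - 1`.  `next v i = some (u, j)` means that the edge with port
number `i` at `v` leads to the vertex `u`, at which it has port number `j`. -/
structure PortGraph (V : Type*) [Fintype V] where
  /-- the degree of each vertex -/
  deg : V → ℕ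
  /-- `next v i = some (u, j)` iff the edge with port `i` at `v` has `u` as its other
  endpoint, where it carries port number `j` -/
  next : V → ℕ → Option (V × ℕ)
  /-- exactly the ports `0, …, deg v - 1` are present at `v` -/
  next_isSome : ∀ v i, (next v i).isSome ↔ i < deg v
  /-- the port labeling is consistent at the two endpoints of every edge -/
  next_symm : ∀ v i u j, next v i = some (u, j) → next u j = some (v, i)
  /-- no self-loops -/
  next_ne : ∀ v i u j, next v i = some (u, j) → u ≠ v
  /-- no multiple edges: distinct ports at `v` lead to distinct neighbors -/
  next_inj : ∀ v i i' u j j', next v i = some (u, j) → next v i' = some (u, j') → i = i'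
  /-- the graph is connected -/
  connected : ∀ u v : V, Relation.ReflTransGen (fun a b => ∃ i j, next a i = some (b, j)) u v

namespace PortGraph

variable {V : Type*} [Fintype V]

/-- `P.viewEq t u v` means that the views of `u` and `v` truncated at depth `t` are equal:
`V^t(u) = V^t(v)`. -/
def viewEq (P : PortGraph V) : ℕ → V → V → Prop
  | 0, u, v => P.deg u = P.deg v
  | t + 1, u, v =>
      P.deg u = P.deg v ∧
        ∀ (i j j' : ℕ) (u' v' : V),
          P.next u i = some (u', j) → P.next v i = some (v', j') →
          j = j' ∧ viewEq P t u' v'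

/-- `P.ViewEq u v` means that the (infinite) views of `u` and `v` are equal:
`V(u) = V(v)`, i.e. `V^t(u) = V^t(v)` for every `t`. -/
def ViewEq (P : PortGraph V) (u v : V) : Prop := ∀ t, P.viewEq t u v

end PortGraph

namespace PortGraph

variable {V : Type*} [Fintype V]

/-- adjacency relation of a port-numbered graph -/
def Adj (P : PortGraph V) (a b : V) : Prop := ∃ i j, P.next a i = some (b, j)

/-- the underlying simple graph of a port-numbered graph -/
def toSimpleGraph (P : PortGraph V) : SimpleGraph V where
  Adj := P.Adj
  symm := by
    constructor
    rintro a b ⟨i, j, h⟩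
    exact ⟨j, i, P.next_symm a i b j h⟩
  loopless := by
    constructor
    rintro a ⟨i, j, h⟩
    exact P.next_ne a i a j h rfl

/-- `P.IsDiameter D` means that the diameter of `P` (the maximum distance between two
vertices) equals `D`. -/
def IsDiameter (P : PortGraph V) (D : ℕ) : Prop :=
  (∀ u v : V, P.toSimpleGraph.dist u v ≤ D) ∧ ∃ u v : V, P.toSimpleGraph.dist u v = D

end PortGraph

namespace PortGraph

variable {V : Type*} [Fintype V]

/-- `P.SymAt t` holds if there is a vertex `v` with
`{u : V^t(u) = V^t(v)} = {u : V(u) = V(v)}`.  The level of symmetry of `P` is the least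
such `t`. -/
def SymAt (P : PortGraph V) (t : ℕ) : Prop :=
  ∃ v : V, ∀ u : V, P.viewEq t u v ↔ P.ViewEq u v

end PortGraph

namespace PortGraph

variable {V : Type*} [Fintype V]

lemma viewEq_refl (P : PortGraph V) : ∀ t u, P.viewEq t u u := by
  intro t
  induction t with
  | zero => intro u; rfl
  | succ t ih =>
    intro u
    refine ⟨rfl, ?_⟩
    intro i j j' u' v' h h'
    have h2 := h.symm.trans h'
    simp only [Option.some.injEq, Prod.mk.injEq] at h2
    obtain ⟨rfl, rfl⟩ := h2
    exact ⟨rfl, ih u'⟩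

lemma viewEq_symm (P : PortGraph V) : ∀ t u v, P.viewEq t u v → P.viewEq t v u := by
  intro t
  induction t with
  | zero => intro u v h; exact h.symm
  | succ t ih =>
    rintro u v ⟨hdeg, h⟩
    refine ⟨hdeg.symm, ?_⟩
    intro i j j' v' u' hv hu
    obtain ⟨hj, hvv⟩ := h i j' j u' v' hu hv
    exact ⟨hj.symm, ih _ _ hvv⟩

lemma viewEq_of_succ (P : PortGraph V) : ∀ t u v, P.viewEq (t + 1) u v → P.viewEq t u v := by
  intro t
  induction t with
  | zero => intro u v h; exact h.1
  | succ t ih =>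
    rintro u v ⟨hdeg, h⟩
    refine ⟨hdeg, ?_⟩
    intro i j j' u' v' hu hv
    obtain ⟨hj, hv'⟩ := h i j j' u' v' hu hv
    exact ⟨hj, ih _ _ hv'⟩

lemma viewEq_mono (P : PortGraph V) : ∀ {t s : ℕ}, s ≤ t → ∀ u v, P.viewEq t u v → P.viewEq s u v := by
  intro t
  induction t with
  | zero => intro s hs u v h; obtain rfl := Nat.le_zero.mp hs; exact h
  | succ t ih =>
    intro s hs u v h
    rcases Nat.eq_or_lt_of_le hs with rfl | hlt
    · exact h
    · exact ih (Nat.lt_succ_iff.mp hlt) u v (P.viewEq_of_succ t u v h)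

lemma viewEq_transfer (P : PortGraph V) {u w : V} (p : P.toSimpleGraph.Walk u w) :
    ∀ (v : V) (t : ℕ), p.length ≤ t → P.viewEq t u v →
      ∃ y, P.viewEq (t - p.length) w y ∧ (y = w → v = u) := by
  induction p with
  | nil =>
    intro v t _ h
    exact ⟨v, by simpa using h, fun hy => hy ▸ rfl⟩
  | @cons a b c hadj q ih =>
    intro v t hlen hview
    simp only [SimpleGraph.Walk.length_cons] at hlen
    obtain ⟨t, rfl⟩ : ∃ t', t = t' + 1 := ⟨t - 1, by omega⟩
    obtain ⟨i, j, hnext⟩ : ∃ i j, P.next a i = some (b, j) := hadj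
    obtain ⟨hdeg, hv⟩ := hview
    have hi : i < P.deg a := (P.next_isSome a i).mp (by rw [hnext]; rfl)
    have hi' : (P.next v i).isSome := (P.next_isSome v i).mpr (hdeg ▸ hi)
    obtain ⟨⟨b', j'⟩, hnext'⟩ := Option.isSome_iff_exists.mp hi'
    obtain ⟨hj, hbb'⟩ := hv i j j' b b' hnext hnext'
    subst hj
    obtain ⟨y, hy, hback⟩ := ih b' t (by omega) hbb'
    refine ⟨y, by show P.viewEq (t + 1 - (q.length + 1)) c y; simpa [Nat.succ_sub_succ] using hy, fun hyw => ?_⟩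
    have hb : b' = b := hback hyw
    subst hb
    have h1 := P.next_symm a i b' j hnext
    have h2 := P.next_symm v i b' j hnext'
    have := h1.symm.trans h2
    simp only [Option.some.injEq, Prod.mk.injEq] at this
    exact this.1.symm

end PortGraph

/-- Let `G` be a port-numbered graph of diameter `D` and level of symmetry `λ` in which
all vertices have pairwise distinct views.  Then any two vertices `u, v` with
`V^{D+λ}(u) = V^{D+λ}(v)` are equal: views truncated at depth `D + λ` are already
pairwise distinct. -/
theorem viewEq_diam_add_levelOfSymmetry_inj {V : Type*} [Fintype V] (P : PortGraph V)
    (D lam : ℕ) (hD : P.IsDiameter D) (hlam : IsLeast {t : ℕ | P.SymAt t} lam)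
    (hdistinct : ∀ u v : V, P.ViewEq u v → u = v) :
    ∀ u v : V, P.viewEq (D + lam) u v → u = v := by
  obtain ⟨hmem, -⟩ := hlam
  obtain ⟨w, hw⟩ := hmem
  intro u v h
  have hreach : P.toSimpleGraph.Reachable u w :=
    (SimpleGraph.reachable_iff_reflTransGen u w).mpr (P.connected u w)
  obtain ⟨p, hp⟩ := hreach.exists_walk_length_eq_dist
  have hpD : p.length ≤ D := hp ▸ hD.1 u w
  obtain ⟨y, hy, hback⟩ := P.viewEq_transfer p v (D + lam) (by omega) h
  have hylam : P.viewEq lam w y := P.viewEq_mono (by omega) _ _ hy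
  have hvw : P.ViewEq y w := (hw y).mp (P.viewEq_symm _ _ _ hylam)
  exact (hback (hdistinct y w hvw)).symm
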